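/- Let f: ℝⁿ → ℝ be convex and (L/n)-smooth with respect to the ℓ₂ norm, X ∈ ℝ^{n×d}, and C ⊆ ℝ^d compact convex. Fix w_{t−1} ∈ C, α ∈ ℝⁿ, let s ∈ argmin_{v∈C} ⟨α, Xv⟩, γ ∈ [0,1], and w_t = (1−γ)w_{t−1} + γs. Let w_⋆ minimize f(Xw) over C, ε_t = f(Xw_t) − f(Xw_⋆), ε_{t−1} = f(Xw_{t−1}) − f(Xw_⋆), H = ‖α − ∇f(Xw_{t−1})‖₁, D₂ = max_{u,v∈C}‖X(u−v)‖₂, D_∞ = max_{u,v∈C}‖X(u−v)‖_∞. Then ε_t ≤ (1−γ)ε_{t−1} + γ²·LD₂²/(2n) + γ·D_∞·H. -/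

import Mathlib

open scoped BigOperators

open Filter

/-- Descent lemma: a convex function with Lipschitz gradient admits a
quadratic upper bound. -/
lemma quad_bound {n : ℕ} (hn : 0 < n) (L : ℝ)
    (f : (Fin n → ℝ) → ℝ) (g : (Fin n → ℝ) → (Fin n → ℝ))
    (hconv : ∀ θ θ' : Fin n → ℝ, f θ + ∑ i, g θ i * (θ' i - θ i) ≤ f θ')
    (hlip : ∀ θ θ' : Fin n → ℝ,
      Real.sqrt (∑ i, (g θ i - g θ' i) ^ 2)
        ≤ (L / n) * Real.sqrt (∑ i, (θ i - θ' i) ^ 2))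
    (θ δ : Fin n → ℝ) :
    f (fun i => θ i + δ i)
      ≤ f θ + (∑ i, g θ i * δ i) + L / (2 * n) * ∑ i, δ i ^ 2 := by
  have hnn : ((n : ℝ)) ≠ 0 := Nat.cast_ne_zero.mpr hn.ne'
  set S := ∑ i, g θ i * δ i with hS
  set Q := ∑ i, δ i ^ 2 with hQdef
  have hQ : 0 ≤ Q := Finset.sum_nonneg fun i _ => sq_nonneg _
  have key : ∀ N : ℕ, 0 < N → ∀ k : ℕ, k ≤ N →
      f (fun i => θ i + ((k : ℝ) / N) * δ i)
        ≤ f θ + ((k : ℝ) / N) * S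
          + L / n * Q * ((k : ℝ) * ((k : ℝ) + 1)) / (2 * (N : ℝ) ^ 2) := by
    intro N hN
    have hNpos : (0 : ℝ) < N := by exact_mod_cast hN
    intro k
    induction k with
    | zero => intro _; simp
    | succ k ih =>
      intro hk1
      have hk : k ≤ N := Nat.le_of_succ_le hk1
      have hIH := ih hk
      set θk : Fin n → ℝ := fun i => θ i + ((k : ℝ) / N) * δ i with hθk
      set θk1 : Fin n → ℝ := fun i => θ i + (((k : ℝ) + 1) / N) * δ i with hθk1
      have step1 : f θk1 ≤ f θk + (1 / (N : ℝ)) * ∑ i, g θk1 i * δ i := by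
        have h := hconv θk1 θk
        have he : ∑ i, g θk1 i * (θk i - θk1 i)
            = -(1 / (N : ℝ)) * ∑ i, g θk1 i * δ i := by
          rw [Finset.mul_sum]
          refine Finset.sum_congr rfl fun i _ => ?_
          simp only [hθk, hθk1]
          ring
        rw [he] at h
        linarith
      have step2 : ∑ i, g θk1 i * δ i
          ≤ S + L / n * (((k : ℝ) + 1) / N) * Q := by
        have hsplit : ∑ i, g θk1 i * δ i
            = S + ∑ i, (g θk1 i - g θ i) * δ i := by
          rw [hS, ← Finset.sum_add_distrib]
          exact Finset.sum_congr rfl fun i _ => by ring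
        have hcs : ∑ i, (g θk1 i - g θ i) * δ i
            ≤ Real.sqrt (∑ i, (g θk1 i - g θ i) ^ 2) * Real.sqrt Q :=
          Real.sum_mul_le_sqrt_mul_sqrt _ _ _
        have hdist : ∑ i, (θk1 i - θ i) ^ 2 = (((k : ℝ) + 1) / N) ^ 2 * Q := by
          rw [hQdef, Finset.mul_sum]
          refine Finset.sum_congr rfl fun i _ => ?_
          simp only [hθk1]
          ring
        have hsq : Real.sqrt (∑ i, (θk1 i - θ i) ^ 2)
            = (((k : ℝ) + 1) / N) * Real.sqrt Q := by
          rw [hdist, Real.sqrt_mul (sq_nonneg _), Real.sqrt_sq (by positivity)]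
        have hlip' := hlip θk1 θ
        rw [hsq] at hlip'
        have h2 : Real.sqrt (∑ i, (g θk1 i - g θ i) ^ 2) * Real.sqrt Q
            ≤ (L / n * ((((k : ℝ) + 1) / N) * Real.sqrt Q)) * Real.sqrt Q :=
          mul_le_mul_of_nonneg_right hlip' (Real.sqrt_nonneg _)
        have h3 : (L / n * ((((k : ℝ) + 1) / N) * Real.sqrt Q)) * Real.sqrt Q
            = L / n * (((k : ℝ) + 1) / N) * Q := by
          rw [show (L / (n:ℝ) * ((((k : ℝ) + 1) / N) * Real.sqrt Q)) * Real.sqrt Q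
            = L / n * (((k : ℝ) + 1) / N) * (Real.sqrt Q * Real.sqrt Q) from by ring,
            Real.mul_self_sqrt hQ]
        rw [h3] at h2
        linarith [hsplit, hcs, h2]
      have step3 : f θk1 ≤ f θk
          + (1 / (N : ℝ)) * (S + L / n * (((k : ℝ) + 1) / N) * Q) := by
        have := mul_le_mul_of_nonneg_left step2 (by positivity : (0:ℝ) ≤ 1 / N)
        linarith
      have hfinal : f θ + ((k : ℝ) / N) * S
            + L / n * Q * ((k : ℝ) * ((k : ℝ) + 1)) / (2 * (N : ℝ) ^ 2)
          + (1 / (N : ℝ)) * (S + L / n * (((k : ℝ) + 1) / N) * Q)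
          = f θ + (((k : ℕ) + 1 : ℕ) : ℝ) / N * S
            + L / n * Q * ((((k : ℕ) + 1 : ℕ) : ℝ) * ((((k : ℕ) + 1 : ℕ) : ℝ) + 1))
              / (2 * (N : ℝ) ^ 2) := by
        have hN0 : (N : ℝ) ≠ 0 := ne_of_gt hNpos
        push_cast
        field_simp [hN0, hnn]
        ring
      calc f (fun i => θ i + (((k : ℕ) + 1 : ℕ) : ℝ) / N * δ i)
          = f θk1 := by
            congr 1
            funext i
            simp only [hθk1]
            push_cast
            ring_nf
        _ ≤ f θk + (1 / (N : ℝ)) * (S + L / n * (((k : ℝ) + 1) / N) * Q) := step3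
        _ ≤ f θ + ((k : ℝ) / N) * S
              + L / n * Q * ((k : ℝ) * ((k : ℝ) + 1)) / (2 * (N : ℝ) ^ 2)
            + (1 / (N : ℝ)) * (S + L / n * (((k : ℝ) + 1) / N) * Q) := by
            linarith
        _ = _ := hfinal
  have lim : ∀ N : ℕ, 1 ≤ N →
      f (fun i => θ i + δ i) - (f θ + S + L / (2 * n) * Q)
        ≤ (L / n * Q / 2) * (1 / (N : ℝ)) := by
    intro N hN
    have hNpos : (0 : ℝ) < N := by exact_mod_cast hN
    have h := key N hN N le_rfl
    have hNN : ((N : ℝ) / N) = 1 := div_self (ne_of_gt hNpos)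
    rw [hNN] at h
    simp only [one_mul] at h
    have hQexp : L / n * Q * ((N : ℝ) * ((N : ℝ) + 1)) / (2 * (N : ℝ) ^ 2)
        = L / (2 * n) * Q + (L / n * Q / 2) * (1 / (N : ℝ)) := by
      have hN0 : (N : ℝ) ≠ 0 := ne_of_gt hNpos
      field_simp [hN0, hnn]
    rw [hQexp] at h
    linarith
  have htend : Tendsto (fun N : ℕ => (L / n * Q / 2) * (1 / (N : ℝ)))
      atTop (nhds 0) := by
    simpa using tendsto_one_div_atTop_nhds_zero_nat.const_mul (L / n * Q / 2)
  have hle : f (fun i => θ i + δ i) - (f θ + S + L / (2 * n) * Q) ≤ 0 := by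
    refine ge_of_tendsto htend ?_
    exact Filter.eventually_atTop.mpr ⟨1, fun N hN => lim N hN⟩
  linarith

/-- Key descent lemma for the (stochastic) Frank-Wolfe step with an arbitrary
direction `α`. `g` is the gradient of the convex function `f`, which is
`(L/n)`-smooth with respect to the `ℓ₂` norm. -/
theorem stmt_7 {n d : ℕ} (hn : 0 < n) (L : ℝ)
    (f : (Fin n → ℝ) → ℝ) (g : (Fin n → ℝ) → (Fin n → ℝ))
    -- convexity of differentiable `f` via the gradient inequality
    (hconv : ∀ θ θ' : Fin n → ℝ, f θ + ∑ i, g θ i * (θ' i - θ i) ≤ f θ')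
    -- `(L/n)`-smoothness in the `ℓ₂` norm: the gradient is `(L/n)`-Lipschitz
    (hlip : ∀ θ θ' : Fin n → ℝ,
      Real.sqrt (∑ i, (g θ i - g θ' i) ^ 2)
        ≤ (L / n) * Real.sqrt (∑ i, (θ i - θ' i) ^ 2))
    (X : Matrix (Fin n) (Fin d) ℝ) (C : Set (Fin d → ℝ))
    (hCcomp : IsCompact C) (hCconv : Convex ℝ C)
    (wprev : Fin d → ℝ) (hwprev : wprev ∈ C)
    (α : Fin n → ℝ)
    (s : Fin d → ℝ) (hs : s ∈ C)
    (hsmin : ∀ v ∈ C, ∑ i, α i * X.mulVec s i ≤ ∑ i, α i * X.mulVec v i)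
    (γ : ℝ) (hγ : γ ∈ Set.Icc (0 : ℝ) 1)
    (wstar : Fin d → ℝ) (hwstar : wstar ∈ C)
    (hmin : ∀ v ∈ C, f (X.mulVec wstar) ≤ f (X.mulVec v))
    (D2 Dinf : ℝ)
    (hD2 : IsGreatest {r : ℝ | ∃ u ∈ C, ∃ v ∈ C,
      r = Real.sqrt (∑ i, (X.mulVec u i - X.mulVec v i) ^ 2)} D2)
    (hDinf : IsGreatest {r : ℝ | ∃ u ∈ C, ∃ v ∈ C,
      r = ⨆ i, |X.mulVec u i - X.mulVec v i|} Dinf) :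
    f (X.mulVec fun j => (1 - γ) * wprev j + γ * s j) - f (X.mulVec wstar)
      ≤ (1 - γ) * (f (X.mulVec wprev) - f (X.mulVec wstar))
        + γ ^ 2 * (L * D2 ^ 2) / (2 * n)
        + γ * Dinf * ∑ i, |α i - g (X.mulVec wprev) i| := by
  obtain ⟨hγ0, hγ1⟩ := hγ
  have hnR : (0 : ℝ) < n := by exact_mod_cast hn
  set θ := X.mulVec wprev with hθ
  set u := X.mulVec s with hu
  set z := X.mulVec wstar with hz
  set δ : Fin n → ℝ := fun i => γ * (u i - θ i) with hδ
  -- L is nonnegative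
  have hL : 0 ≤ L := by
    set i0 : Fin n := ⟨0, hn⟩ with hi0
    have h := hlip (fun _ => (0 : ℝ)) (fun i => if i = i0 then 1 else 0)
    have h1 : (∑ i : Fin n, ((fun _ => (0:ℝ)) i - (if i = i0 then (1:ℝ) else 0)) ^ 2) = 1 := by
      have he : ∀ i : Fin n, ((fun _ => (0:ℝ)) i - (if i = i0 then (1:ℝ) else 0)) ^ 2
          = if i = i0 then (1:ℝ) else 0 := by
        intro i; by_cases hi : i = i0 <;> simp [hi]
      rw [Finset.sum_congr rfl fun i _ => he i]
      simp
    rw [h1, Real.sqrt_one, mul_one] at h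
    have h0 : (0 : ℝ) ≤ L / n := le_trans (Real.sqrt_nonneg _) h
    have := mul_nonneg h0 (le_of_lt hnR)
    rwa [div_mul_cancel₀ _ (ne_of_gt hnR)] at this
  -- the new iterate
  have hwt : (X.mulVec fun j => (1 - γ) * wprev j + γ * s j)
      = fun i => θ i + δ i := by
    funext i
    simp only [hθ, hu, hδ, Matrix.mulVec, dotProduct]
    rw [← Finset.sum_sub_distrib]
    rw [show ∑ j, (X i j * wprev j)
        + γ * (∑ j, (X i j * s j - X i j * wprev j))
      = ∑ j, (X i j * wprev j + γ * (X i j * s j - X i j * wprev j)) by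
        rw [Finset.sum_add_distrib, Finset.mul_sum]]
    exact Finset.sum_congr rfl fun j _ => by ring
  -- quadratic upper bound
  have hquad := quad_bound hn L f g hconv hlip θ δ
  rw [← hwt] at hquad
  -- bound on ∑ δ²
  have hD2nonneg : 0 ≤ D2 := by
    have hmem : Real.sqrt (∑ i, (X.mulVec wprev i - X.mulVec wprev i) ^ 2) ≤ D2 :=
      hD2.2 ⟨wprev, hwprev, wprev, hwprev, rfl⟩
    exact le_trans (Real.sqrt_nonneg _) hmem
  have hsum2 : ∑ i, (u i - θ i) ^ 2 ≤ D2 ^ 2 := by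
    have hmem : Real.sqrt (∑ i, (u i - θ i) ^ 2) ≤ D2 :=
      hD2.2 ⟨s, hs, wprev, hwprev, rfl⟩
    have h := pow_le_pow_left₀ (Real.sqrt_nonneg _) hmem 2
    rwa [Real.sq_sqrt (Finset.sum_nonneg fun i _ => sq_nonneg _)] at h
  have hδ2 : ∑ i, δ i ^ 2 ≤ γ ^ 2 * D2 ^ 2 := by
    have : ∑ i, δ i ^ 2 = γ ^ 2 * ∑ i, (u i - θ i) ^ 2 := by
      rw [Finset.mul_sum]
      exact Finset.sum_congr rfl fun i _ => by simp only [hδ]; ring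
    rw [this]
    exact mul_le_mul_of_nonneg_left hsum2 (sq_nonneg _)
  -- bound on Dinf
  have hDinfbound : ∀ i, |u i - z i| ≤ Dinf := by
    intro i
    have hmem : (⨆ j, |X.mulVec s j - X.mulVec wstar j|) ≤ Dinf :=
      hDinf.2 ⟨s, hs, wstar, hwstar, rfl⟩
    have hle : |u i - z i| ≤ ⨆ j, |X.mulVec s j - X.mulVec wstar j| :=
      le_ciSup (Set.Finite.bddAbove (Set.finite_range
        (fun j => |X.mulVec s j - X.mulVec wstar j|))) i
    exact le_trans hle hmem
  set H := ∑ i, |α i - g θ i| with hH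
  -- decompose the linear term
  have hdecomp : ∑ i, g θ i * δ i
      = γ * ((∑ i, (g θ i - α i) * (u i - z i))
          + (∑ i, α i * u i - ∑ i, α i * z i)
          + (∑ i, g θ i * (z i - θ i))) := by
    rw [← Finset.sum_sub_distrib, ← Finset.sum_add_distrib,
      ← Finset.sum_add_distrib, Finset.mul_sum]
    exact Finset.sum_congr rfl fun i _ => by simp only [hδ]; ring
  -- term A: Hölder
  have hA : ∑ i, (g θ i - α i) * (u i - z i) ≤ Dinf * H := by
    have hDinf0 : 0 ≤ Dinf := le_trans (abs_nonneg _) (hDinfbound ⟨0, hn⟩)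
    rw [hH, Finset.mul_sum]
    refine Finset.sum_le_sum fun i _ => ?_
    calc (g θ i - α i) * (u i - z i) ≤ |(g θ i - α i) * (u i - z i)| :=
          le_abs_self _
      _ = |α i - g θ i| * |u i - z i| := by rw [abs_mul, abs_sub_comm]
      _ ≤ |α i - g θ i| * Dinf :=
          mul_le_mul_of_nonneg_left (hDinfbound i) (abs_nonneg _)
      _ = Dinf * |α i - g θ i| := mul_comm _ _
  -- term B: optimality of s
  have hB : ∑ i, α i * u i - ∑ i, α i * z i ≤ 0 := by
    have := hsmin wstar hwstar
    rw [← hz] at this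
    linarith
  -- term C: convexity
  have hC : ∑ i, g θ i * (z i - θ i) ≤ f z - f θ := by
    have := hconv θ z
    linarith
  -- combine
  have hlin : ∑ i, g θ i * δ i ≤ γ * (Dinf * H + (f z - f θ)) := by
    rw [hdecomp]
    have hsum : (∑ i, (g θ i - α i) * (u i - z i))
        + (∑ i, α i * u i - ∑ i, α i * z i)
        + (∑ i, g θ i * (z i - θ i)) ≤ Dinf * H + (f z - f θ) := by
      linarith
    exact mul_le_mul_of_nonneg_left hsum hγ0
  have hquadfinal : L / (2 * n) * ∑ i, δ i ^ 2
      ≤ γ ^ 2 * (L * D2 ^ 2) / (2 * n) := by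
    have hc : (0 : ℝ) ≤ L / (2 * n) := by positivity
    calc L / (2 * n) * ∑ i, δ i ^ 2 ≤ L / (2 * n) * (γ ^ 2 * D2 ^ 2) :=
          mul_le_mul_of_nonneg_left hδ2 hc
      _ = γ ^ 2 * (L * D2 ^ 2) / (2 * n) := by ring
  have : f (X.mulVec fun j => (1 - γ) * wprev j + γ * s j)
      ≤ f θ + γ * (Dinf * H + (f z - f θ))
        + γ ^ 2 * (L * D2 ^ 2) / (2 * n) := by
    linarith
  have hgoal : f θ + γ * (Dinf * H + (f z - f θ))
      + γ ^ 2 * (L * D2 ^ 2) / (2 * n) - f z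
      = (1 - γ) * (f θ - f z) + γ ^ 2 * (L * D2 ^ 2) / (2 * n)
        + γ * Dinf * H := by ring
  rw [hθ] at hH
  linarith [hgoal, this]
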